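/- Suppose G(λ) < ∞ and ∑_{x∈ℕ^I} (∑_{i∈I} x_i) Φ(x) λ^x < ∞. Then the total mean number of jobs satisfies L = ( Λ(I) + ∑_{k∈K} μ_k ψ_k L_{|−k} ) / ( M(K) − Λ(I) ). -/

import Mathlib

open scoped BigOperators

/-- The balance function of balanced fairness: `Φ(0) = 1` and
`Φ(x) = (∑_{i : x_i > 0} Φ(x - e_i)) / M(⋃_{i : x_i > 0} 𝒦_i)`. -/
noncomputable def Phi {I K : Type} [Fintype I] [DecidableEq I] [DecidableEq K]
    (μ : K → ℝ) (Ka : I → Finset K) (x : I → ℕ) : ℝ :=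
  if x = fun _ => 0 then 1
  else (∑ i ∈ (Finset.univ.filter (fun i => 0 < x i)).attach,
      Phi μ Ka (Function.update x i.1 (x i.1 - 1))) /
    (∑ k ∈ (Finset.univ.filter (fun i => 0 < x i)).biUnion Ka, μ k)
termination_by ∑ i, x i
decreasing_by
  have hi := i.2
  simp only [Finset.mem_filter] at hi
  apply Finset.sum_lt_sum
  · intro j _
    rcases eq_or_ne j i.1 with rfl | h
    · simp [Function.update_self]
    · rw [Function.update_of_ne h]
  · exact ⟨i.1, Finset.mem_univ i.1, by simp [Function.update_self]; omega⟩

/-- The normalization series `G(λ) = ∑_{x∈ℕ^I} Φ(x) λ^x` (as a real tsum). -/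
noncomputable def Gf {I K : Type} [Fintype I] [DecidableEq I] [DecidableEq K]
    (μ : K → ℝ) (Ka : I → Finset K) (lam : I → ℝ) : ℝ :=
  ∑' x : I → ℕ, Phi μ Ka x * ∏ i, lam i ^ x i

/-- The total mean number of jobs, `L = ψ ∑_{x∈ℕ^I} (∑_i x_i) Φ(x) λ^x`. -/
noncomputable def totalMeanJobs {I K : Type} [Fintype I] [DecidableEq I] [DecidableEq K]
    (μ : K → ℝ) (Ka : I → Finset K) (lam : I → ℝ) : ℝ :=
  (Gf μ Ka lam)⁻¹ * ∑' x : I → ℕ, (∑ i, (x i : ℝ)) * Phi μ Ka x * ∏ j, lam j ^ x j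

/-- Arrival rates of the system with all traffic of classes assigned to server `k` removed. -/
def lamMinus {I K : Type} [DecidableEq K] (Ka : I → Finset K) (lam : I → ℝ) (k : K) :
    I → ℝ :=
  fun i => if k ∈ Ka i then 0 else lam i

section Aux

set_option linter.unusedSectionVars false

variable {I K : Type} [Fintype I] [DecidableEq I] [DecidableEq K]

lemma Phi_zero (μ : K → ℝ) (Ka : I → Finset K) : Phi μ Ka (fun _ => 0) = 1 := by
  rw [Phi]; simp

lemma sum_update_pred {x : I → ℕ} {i : I} (h : 0 < x i) :
    (∑ j, Function.update x i (x i - 1) j) + 1 = ∑ j, x j := by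
  rw [Finset.sum_update_of_mem (Finset.mem_univ i), Finset.sdiff_singleton_eq_erase,
    ← Finset.add_sum_erase Finset.univ x (Finset.mem_univ i)]
  omega

lemma Phi_nonneg (μ : K → ℝ) (hμ : ∀ k, 0 ≤ μ k) (Ka : I → Finset K) (x : I → ℕ) :
    0 ≤ Phi μ Ka x := by
  suffices h : ∀ n (x : I → ℕ), ∑ i, x i = n → 0 ≤ Phi μ Ka x from h _ x rfl
  intro n
  induction n using Nat.strong_induction_on with
  | _ n ih =>
    intro x hn
    rw [Phi]
    split
    · norm_num
    · refine div_nonneg (Finset.sum_nonneg fun i _ => ?_) (Finset.sum_nonneg fun k _ => hμ k)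
      have hi : 0 < x i.1 := (Finset.mem_filter.mp i.2).2
      have := sum_update_pred (x := x) hi
      exact ih _ (by omega) _ rfl

lemma den_pos (μ : K → ℝ) (hμ : ∀ k, 0 < μ k) (Ka : I → Finset K) (hKa : ∀ i, (Ka i).Nonempty)
    {x : I → ℕ} (hx : x ≠ fun _ => 0) :
    0 < ∑ k ∈ (Finset.univ.filter (fun i => 0 < x i)).biUnion Ka, μ k := by
  obtain ⟨i, hi⟩ : ∃ i, 0 < x i := by
    by_contra h
    push_neg at h
    exact hx (funext fun i => Nat.le_zero.mp (h i))
  refine Finset.sum_pos (fun k _ => hμ k) ?_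
  obtain ⟨k, hk⟩ := hKa i
  exact ⟨k, Finset.mem_biUnion.mpr ⟨i, Finset.mem_filter.mpr ⟨Finset.mem_univ i, hi⟩, hk⟩⟩

lemma Phi_rec (μ : K → ℝ) (hμ : ∀ k, 0 < μ k) (Ka : I → Finset K) (hKa : ∀ i, (Ka i).Nonempty)
    {x : I → ℕ} (hx : x ≠ fun _ => 0) :
    (∑ k ∈ (Finset.univ.filter (fun i => 0 < x i)).biUnion Ka, μ k) * Phi μ Ka x
      = ∑ i ∈ Finset.univ.filter (fun i => 0 < x i),
          Phi μ Ka (Function.update x i (x i - 1)) := by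
  rw [Phi, if_neg hx, mul_comm, div_mul_cancel₀ _ (den_pos μ hμ Ka hKa hx).ne']
  exact Finset.sum_attach (Finset.univ.filter (fun i => 0 < x i))
    (fun i => Phi μ Ka (Function.update x i (x i - 1)))

def shiftUp (i : I) (y : I → ℕ) : I → ℕ := Function.update y i (y i + 1)

lemma shiftUp_injective (i : I) : Function.Injective (shiftUp (I := I) i) := by
  intro y z h
  funext j
  rcases eq_or_ne j i with rfl | hj
  · have := congrFun h j
    simpa [shiftUp, Function.update_self] using this
  · have := congrFun h j
    simpa [shiftUp, Function.update_of_ne hj] using this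

lemma shiftUp_sum (i : I) (y : I → ℕ) : ∑ j, shiftUp i y j = (∑ j, y j) + 1 := by
  unfold shiftUp
  rw [Finset.sum_update_of_mem (Finset.mem_univ i), Finset.sdiff_singleton_eq_erase,
    ← Finset.add_sum_erase Finset.univ y (Finset.mem_univ i)]
  omega

lemma shiftUp_prod (i : I) (y : I → ℕ) (lam : I → ℝ) :
    ∏ j, lam j ^ shiftUp i y j = lam i * ∏ j, lam j ^ y j := by
  rw [← Finset.mul_prod_erase Finset.univ (fun j => lam j ^ shiftUp i y j) (Finset.mem_univ i),
    ← Finset.mul_prod_erase Finset.univ (fun j => lam j ^ y j) (Finset.mem_univ i)]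
  have h1 : shiftUp i y i = y i + 1 := Function.update_self _ _ _
  have h2 : ∀ j ∈ Finset.univ.erase i, lam j ^ shiftUp i y j = lam j ^ y j := by
    intro j hj
    rw [shiftUp, Function.update_of_ne (Finset.mem_erase.mp hj).1]
  rw [Finset.prod_congr rfl h2, h1, pow_succ]
  ring

lemma shiftUp_update (i : I) (y : I → ℕ) :
    Function.update (shiftUp i y) i (shiftUp i y i - 1) = y := by
  funext j
  rcases eq_or_ne j i with rfl | hj
  · simp [shiftUp, Function.update_self]
  · simp [shiftUp, Function.update_of_ne hj]

lemma mem_range_shiftUp {i : I} {x : I → ℕ} (hx : 0 < x i) :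
    x ∈ Set.range (shiftUp (I := I) i) := by
  refine ⟨Function.update x i (x i - 1), ?_⟩
  funext j
  rcases eq_or_ne j i with rfl | hj
  · simp only [shiftUp, Function.update_self]
    omega
  · simp [shiftUp, Function.update_of_ne hj]

/-- The summand of the mean-jobs series. -/
noncomputable def fX (μ : K → ℝ) (Ka : I → Finset K) (lam : I → ℝ) (x : I → ℕ) : ℝ :=
  (∑ i, (x i : ℝ)) * Phi μ Ka x * ∏ j, lam j ^ x j

/-- The mean-jobs series. -/
noncomputable def SX (μ : K → ℝ) (Ka : I → Finset K) (lam : I → ℝ) : ℝ :=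
  ∑' x : I → ℕ, fX μ Ka lam x

noncomputable def gX (μ : K → ℝ) (Ka : I → Finset K) (lam : I → ℝ) (i : I) (x : I → ℕ) : ℝ :=
  if 0 < x i then
    (∑ j, (x j : ℝ)) * Phi μ Ka (Function.update x i (x i - 1)) * ∏ j, lam j ^ x j
  else 0

noncomputable def hX (μ : K → ℝ) (Ka : I → Finset K) (lam : I → ℝ) (k : K) (x : I → ℕ) : ℝ :=
  if k ∈ (Finset.univ.filter (fun i => 0 < x i)).biUnion Ka then 0 else μ k * fX μ Ka lam x

lemma gX_comp (μ : K → ℝ) (Ka : I → Finset K) (lam : I → ℝ) (i : I) (y : I → ℕ) :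
    gX μ Ka lam i (shiftUp i y)
      = lam i * (fX μ Ka lam y + Phi μ Ka y * ∏ j, lam j ^ y j) := by
  have hpos : 0 < shiftUp i y i := by simp [shiftUp, Function.update_self]
  have hs : (∑ j, (shiftUp i y j : ℝ)) = (∑ j, (y j : ℝ)) + 1 := by
    rw [← Nat.cast_sum, ← Nat.cast_sum, ← Nat.cast_one, ← Nat.cast_add, shiftUp_sum]
  simp only [gX, fX]
  rw [if_pos hpos, shiftUp_update, shiftUp_prod, hs]
  ring

lemma summable_gX (μ : K → ℝ) (Ka : I → Finset K) (lam : I → ℝ)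
    (hG : Summable (fun x : I → ℕ => Phi μ Ka x * ∏ j, lam j ^ x j))
    (hL : Summable (fX μ Ka lam)) (i : I) : Summable (gX μ Ka lam i) := by
  have hcomp : Summable (gX μ Ka lam i ∘ shiftUp i) := by
    have he : (gX μ Ka lam i ∘ shiftUp i)
        = fun y => lam i * (fX μ Ka lam y + Phi μ Ka y * ∏ j, lam j ^ y j) :=
      funext fun y => gX_comp μ Ka lam i y
    rw [he]
    exact (hL.add hG).mul_left (lam i)
  refine ((shiftUp_injective i).summable_iff fun x hx => ?_).mp hcomp
  simp only [gX]
  exact if_neg fun h => hx (mem_range_shiftUp h)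

lemma tsum_gX (μ : K → ℝ) (Ka : I → Finset K) (lam : I → ℝ)
    (hG : Summable (fun x : I → ℕ => Phi μ Ka x * ∏ j, lam j ^ x j))
    (hL : Summable (fX μ Ka lam)) (i : I) :
    ∑' x : I → ℕ, gX μ Ka lam i x = lam i * (SX μ Ka lam + Gf μ Ka lam) := by
  have hsupp : Function.support (gX μ Ka lam i) ⊆ Set.range (shiftUp i) := by
    intro x hx
    by_contra hr
    apply hx
    simp only [gX]
    exact if_neg fun h => hr (mem_range_shiftUp h)
  rw [← (shiftUp_injective i).tsum_eq hsupp]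
  calc ∑' y : I → ℕ, gX μ Ka lam i (shiftUp i y)
      = ∑' y : I → ℕ, lam i * (fX μ Ka lam y + Phi μ Ka y * ∏ j, lam j ^ y j) :=
        tsum_congr (gX_comp μ Ka lam i)
    _ = lam i * ∑' y : I → ℕ, (fX μ Ka lam y + Phi μ Ka y * ∏ j, lam j ^ y j) := tsum_mul_left
    _ = lam i * (SX μ Ka lam + Gf μ Ka lam) := by rw [Summable.tsum_add hL hG]; rfl

lemma claimA (μ : K → ℝ) (hμ : ∀ k, 0 < μ k) (Ka : I → Finset K) (hKa : ∀ i, (Ka i).Nonempty)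
    (lam : I → ℝ) (x : I → ℕ) :
    (∑ k ∈ (Finset.univ.filter (fun i => 0 < x i)).biUnion Ka, μ k) * fX μ Ka lam x
      = ∑ i, gX μ Ka lam i x := by
  have hgsum : ∑ i, gX μ Ka lam i x
      = ∑ i ∈ Finset.univ.filter (fun i => 0 < x i),
          (∑ j, (x j : ℝ)) * Phi μ Ka (Function.update x i (x i - 1)) * ∏ j, lam j ^ x j := by
    simp only [gX]
    exact (Finset.sum_filter _ _).symm
  rcases eq_or_ne x (fun _ => 0) with rfl | hx
  · simp [fX, gX]
  · rw [hgsum, ← Finset.sum_mul, ← Finset.mul_sum, ← Phi_rec μ hμ Ka hKa hx, fX]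
    ring

lemma claimB (μ : K → ℝ) (Ka : I → Finset K) (lam : I → ℝ) (k : K) (x : I → ℕ) :
    μ k * fX μ Ka (lamMinus Ka lam k) x = hX μ Ka lam k x := by
  simp only [hX]
  by_cases h : k ∈ (Finset.univ.filter (fun i => 0 < x i)).biUnion Ka
  · rw [if_pos h]
    obtain ⟨i, hi, hk⟩ := Finset.mem_biUnion.mp h
    have hxi : 0 < x i := (Finset.mem_filter.mp hi).2
    have hzero : ∏ j, lamMinus Ka lam k j ^ x j = 0 := by
      apply Finset.prod_eq_zero (Finset.mem_univ i)
      simp [lamMinus, hk, zero_pow hxi.ne']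
    rw [fX, hzero, mul_zero, mul_zero]
  · rw [if_neg h]
    have hprod : ∏ j, lamMinus Ka lam k j ^ x j = ∏ j, lam j ^ x j := by
      refine Finset.prod_congr rfl fun i _ => ?_
      by_cases hk : k ∈ Ka i
      · have hxi : x i = 0 := by
          by_contra hxi
          exact h (Finset.mem_biUnion.mpr ⟨i, Finset.mem_filter.mpr
            ⟨Finset.mem_univ i, Nat.pos_of_ne_zero hxi⟩, hk⟩)
        simp [hxi]
      · simp [lamMinus, hk]
    rw [fX, fX, hprod]

lemma claimD [Fintype K] (μ : K → ℝ) (Ka : I → Finset K) (lam : I → ℝ) (x : I → ℕ) :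
    (∑ k ∈ (Finset.univ.filter (fun i => 0 < x i)).biUnion Ka, μ k) * fX μ Ka lam x
      = (∑ k, μ k) * fX μ Ka lam x - ∑ k, hX μ Ka lam k x := by
  have key : ∑ k, hX μ Ka lam k x
      = (∑ k, μ k) * fX μ Ka lam x
        - (∑ k ∈ (Finset.univ.filter (fun i => 0 < x i)).biUnion Ka, μ k) * fX μ Ka lam x := by
    have h2 : ∀ k, hX μ Ka lam k x
        = μ k * fX μ Ka lam x
          - (if k ∈ (Finset.univ.filter (fun i => 0 < x i)).biUnion Ka
              then μ k * fX μ Ka lam x else 0) := by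
      intro k
      simp only [hX]
      by_cases hk : k ∈ (Finset.univ.filter (fun i => 0 < x i)).biUnion Ka <;> simp [hk]
    rw [Finset.sum_congr rfl (fun k _ => h2 k), Finset.sum_sub_distrib,
      Finset.sum_ite_mem, Finset.univ_inter, ← Finset.sum_mul, ← Finset.sum_mul]
  rw [key]
  ring

end Aux

/-- **Theorem 2 of the paper, total.** If `G(λ) < ∞` and
`∑_x (∑_i x_i) Φ(x) λ^x < ∞`, the total mean number of jobs satisfies
`L = (Λ(I) + ∑_{k∈K} μ_k ψ_k L_{|−k}) / (M(K) − Λ(I))`, where `ψ_k = ψ / ψ_{|−k}`. -/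
theorem mean_jobs_recursion_total
    {I K : Type} [Fintype I] [DecidableEq I] [Nonempty I]
    [Fintype K] [DecidableEq K] [Nonempty K]
    (μ : K → ℝ) (hμ : ∀ k, 0 < μ k)
    (Ka : I → Finset K) (hKa : ∀ i, (Ka i).Nonempty) (hcov : ∀ k, ∃ i, k ∈ Ka i)
    (lam : I → ℝ) (hlam : ∀ i, 0 ≤ lam i)
    (hG : Summable (fun x : I → ℕ => Phi μ Ka x * ∏ j, lam j ^ x j))
    (hL : Summable (fun x : I → ℕ => (∑ i, (x i : ℝ)) * Phi μ Ka x * ∏ j, lam j ^ x j)) :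
    totalMeanJobs μ Ka lam =
      ((∑ i, lam i) + ∑ k,
          μ k * ((Gf μ Ka lam)⁻¹ / (Gf μ Ka (lamMinus Ka lam k))⁻¹) *
            totalMeanJobs μ Ka (lamMinus Ka lam k)) /
        ((∑ k, μ k) - ∑ i, lam i) := by
  classical
  have hL' : Summable (fX μ Ka lam) := hL
  have hPhinn : ∀ x : I → ℕ, 0 ≤ Phi μ Ka x := Phi_nonneg μ (fun k => (hμ k).le) Ka
  have hlmnn : ∀ k i, 0 ≤ lamMinus Ka lam k i := by
    intro k i
    simp only [lamMinus]
    split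
    · exact le_rfl
    · exact hlam i
  have hlmle : ∀ k i, lamMinus Ka lam k i ≤ lam i := by
    intro k i
    simp only [lamMinus]
    split
    · exact hlam i
    · exact le_rfl
  have hprodnn : ∀ (l : I → ℝ), (∀ i, 0 ≤ l i) → ∀ x : I → ℕ, (0:ℝ) ≤ ∏ j, l j ^ x j :=
    fun l hl x => Finset.prod_nonneg fun j _ => pow_nonneg (hl j) _
  have hprodk_le : ∀ k (x : I → ℕ), (∏ j, lamMinus Ka lam k j ^ x j) ≤ ∏ j, lam j ^ x j :=
    fun k x => Finset.prod_le_prod (fun j _ => pow_nonneg (hlmnn k j) _)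
      (fun j _ => pow_le_pow_left₀ (hlmnn k j) (hlmle k j) _)
  have hxsum_nn : ∀ x : I → ℕ, (0:ℝ) ≤ ∑ i, (x i : ℝ) :=
    fun x => Finset.sum_nonneg fun i _ => Nat.cast_nonneg _
  have hfnn : ∀ (l : I → ℝ), (∀ i, 0 ≤ l i) → ∀ x : I → ℕ, 0 ≤ fX μ Ka l x :=
    fun l hl x => mul_nonneg (mul_nonneg (hxsum_nn x) (hPhinn x)) (hprodnn l hl x)
  have hGk : ∀ k, Summable (fun x : I → ℕ => Phi μ Ka x * ∏ j, lamMinus Ka lam k j ^ x j) := by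
    intro k
    exact Summable.of_nonneg_of_le (fun x => mul_nonneg (hPhinn x) (hprodnn _ (hlmnn k) x))
      (fun x => mul_le_mul_of_nonneg_left (hprodk_le k x) (hPhinn x)) hG
  have hLk : ∀ k, Summable (fX μ Ka (lamMinus Ka lam k)) := by
    intro k
    refine Summable.of_nonneg_of_le (fun x => hfnn _ (hlmnn k) x) (fun x => ?_) hL'
    exact mul_le_mul_of_nonneg_left (hprodk_le k x) (mul_nonneg (hxsum_nn x) (hPhinn x))
  have hGpos : ∀ (l : I → ℝ), (∀ i, 0 ≤ l i) →
      Summable (fun x : I → ℕ => Phi μ Ka x * ∏ j, l j ^ x j) → 1 ≤ Gf μ Ka l := by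
    intro l hl hsum
    have h0 : Phi μ Ka (fun _ => 0) * ∏ j, l j ^ (fun _ => (0:ℕ)) j = 1 := by
      simp [Phi_zero]
    calc (1:ℝ) = Phi μ Ka (fun _ => 0) * ∏ j, l j ^ (fun _ => (0:ℕ)) j := h0.symm
      _ ≤ Gf μ Ka l := Summable.le_tsum hsum _ fun x _ => mul_nonneg (hPhinn x) (hprodnn _ hl x)
  have hG1 : 1 ≤ Gf μ Ka lam := hGpos lam hlam hG
  have hGk1 : ∀ k, 1 ≤ Gf μ Ka (lamMinus Ka lam k) := fun k => hGpos _ (hlmnn k) (hGk k)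
  have hGne : Gf μ Ka lam ≠ 0 := by linarith
  have hGkne : ∀ k, Gf μ Ka (lamMinus Ka lam k) ≠ 0 := fun k => by have := hGk1 k; linarith
  have hSnn : 0 ≤ SX μ Ka lam := tsum_nonneg fun x => hfnn lam hlam x
  have hSknn : ∀ k, 0 ≤ SX μ Ka (lamMinus Ka lam k) :=
    fun k => tsum_nonneg fun x => hfnn _ (hlmnn k) x
  have hsum_hX : ∀ k, Summable (hX μ Ka lam k) := by
    intro k
    have he : hX μ Ka lam k = fun x => μ k * fX μ Ka (lamMinus Ka lam k) x :=
      funext fun x => (claimB μ Ka lam k x).symm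
    rw [he]
    exact (hLk k).mul_left (μ k)
  have htsum_hX : ∀ k, ∑' x : I → ℕ, hX μ Ka lam k x = μ k * SX μ Ka (lamMinus Ka lam k) := by
    intro k
    rw [tsum_congr (fun x => (claimB μ Ka lam k x).symm)]
    exact (hLk k).tsum_mul_left (μ k)
  -- the key identity
  have key : (∑ i, lam i) * (SX μ Ka lam + Gf μ Ka lam)
      = (∑ k, μ k) * SX μ Ka lam - ∑ k, μ k * SX μ Ka (lamMinus Ka lam k) := by
    have lhs : ∑ i, ∑' x : I → ℕ, gX μ Ka lam i x
        = (∑ i, lam i) * (SX μ Ka lam + Gf μ Ka lam) := by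
      rw [Finset.sum_congr rfl (fun i _ => tsum_gX μ Ka lam hG hL' i), ← Finset.sum_mul]
    rw [← lhs, ← Summable.tsum_finsetSum (fun i _ => summable_gX μ Ka lam hG hL' i)]
    have hpt : ∀ x : I → ℕ, (∑ i, gX μ Ka lam i x)
        = (∑ k, μ k) * fX μ Ka lam x - ∑ k, hX μ Ka lam k x := by
      intro x
      rw [← claimA μ hμ Ka hKa lam x, claimD μ Ka lam x]
    rw [tsum_congr hpt, Summable.tsum_sub (hL'.mul_left _) (summable_sum (fun k _ => hsum_hX k)),
      tsum_mul_left, Summable.tsum_finsetSum (fun k _ => hsum_hX k)]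
    congr 1
    exact Finset.sum_congr rfl fun k _ => htsum_hX k
  have hMpos : 0 < ∑ k, μ k := Finset.sum_pos (fun k _ => hμ k) Finset.univ_nonempty
  have hkey' : ((∑ k, μ k) - ∑ i, lam i) * SX μ Ka lam
      = (∑ i, lam i) * Gf μ Ka lam + ∑ k, μ k * SX μ Ka (lamMinus Ka lam k) := by
    linear_combination -key
  have hSignn : 0 ≤ ∑ k, μ k * SX μ Ka (lamMinus Ka lam k) :=
    Finset.sum_nonneg fun k _ => mul_nonneg (hμ k).le (hSknn k)
  have hΛM : ∑ i, lam i < ∑ k, μ k := by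
    by_contra hc
    push_neg at hc
    have h1 : ((∑ k, μ k) - ∑ i, lam i) * SX μ Ka lam ≤ 0 :=
      mul_nonpos_iff.mpr (Or.inr ⟨by linarith, hSnn⟩)
    have h2 : (∑ k, μ k) * 1 ≤ (∑ i, lam i) * Gf μ Ka lam := by
      calc (∑ k, μ k) * 1 ≤ (∑ k, μ k) * Gf μ Ka lam :=
            mul_le_mul_of_nonneg_left hG1 hMpos.le
        _ ≤ (∑ i, lam i) * Gf μ Ka lam :=
            mul_le_mul_of_nonneg_right hc (by linarith)
    rw [hkey'] at h1
    linarith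
  have hMΛne : ((∑ k, μ k) - ∑ i, lam i) ≠ 0 := ne_of_gt (by linarith)
  -- rewrite the goal
  have hTM : ∀ (l : I → ℝ), totalMeanJobs μ Ka l = (Gf μ Ka l)⁻¹ * SX μ Ka l := fun l => rfl
  have hterm : ∀ k, μ k * ((Gf μ Ka lam)⁻¹ / (Gf μ Ka (lamMinus Ka lam k))⁻¹) *
      totalMeanJobs μ Ka (lamMinus Ka lam k)
      = (Gf μ Ka lam)⁻¹ * (μ k * SX μ Ka (lamMinus Ka lam k)) := by
    intro k
    rw [hTM, div_inv_eq_mul]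
    have heq : μ k * ((Gf μ Ka lam)⁻¹ * Gf μ Ka (lamMinus Ka lam k)) *
        ((Gf μ Ka (lamMinus Ka lam k))⁻¹ * SX μ Ka (lamMinus Ka lam k))
        = (Gf μ Ka lam)⁻¹ * (μ k * SX μ Ka (lamMinus Ka lam k)) *
          (Gf μ Ka (lamMinus Ka lam k) * (Gf μ Ka (lamMinus Ka lam k))⁻¹) := by ring
    rw [heq, mul_inv_cancel₀ (hGkne k), mul_one]
  have hsum_eq : (∑ k, μ k * ((Gf μ Ka lam)⁻¹ / (Gf μ Ka (lamMinus Ka lam k))⁻¹) *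
      totalMeanJobs μ Ka (lamMinus Ka lam k))
      = (Gf μ Ka lam)⁻¹ * ∑ k, μ k * SX μ Ka (lamMinus Ka lam k) := by
    rw [Finset.mul_sum]
    exact Finset.sum_congr rfl fun k _ => hterm k
  rw [hTM, hsum_eq, eq_div_iff hMΛne]
  have hSeq : ∑ k, μ k * SX μ Ka (lamMinus Ka lam k)
      = ((∑ k, μ k) - ∑ i, lam i) * SX μ Ka lam - (∑ i, lam i) * Gf μ Ka lam := by
    linarith
  rw [hSeq]
  field_simp
  ring
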